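/- In the Hitting-Set-to-Multipacking reduction graph G (set vertices S_1,…,S_m forming a clique, pendant paths u_i^1⋯u_i^{k−1} attached for each element u_i, with u_i^1 adjacent to S_j iff u_i ∉ S_j), the graph G is chordal: every cycle of length at least 4 has a chord. -/

import Mathlib

def Multipacking {V : Type*} (G : SimpleGraph V) (M : Finset V) : Prop :=
  ∀ v : V, ∀ r : ℕ, 1 ≤ r → ({u : V | u ∈ M ∧ G.edist v u ≤ r}).ncard ≤ r

/-- Vertices of the reduction graph: `inl j` is the set vertex `Sⱼ`, and `inr (i, t)`
is the path vertex `uᵢ^{t+1}` (so `inr (i, 0)` is `uᵢ¹` and `inr (i, k-2)` is `uᵢ^{k-1}`). -/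
abbrev RedV (n m k : ℕ) := Fin m ⊕ (Fin n × Fin (k - 1))

/-- The graph of the Hitting-Set-to-Multipacking reduction: the set vertices `Sⱼ` form a
clique, each element `uᵢ` carries a pendant path `uᵢ¹ uᵢ² ⋯ uᵢ^{k−1}`, and `uᵢ¹` is
adjacent to `Sⱼ` iff `uᵢ ∉ Sⱼ`. -/
def redGraph (n m k : ℕ) (S : Fin m → Finset (Fin n)) : SimpleGraph (RedV n m k) :=
  SimpleGraph.fromRel (fun x y =>
    (∃ j j' : Fin m, x = Sum.inl j ∧ y = Sum.inl j') ∨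
    (∃ (i : Fin n) (t t' : Fin (k - 1)), (t' : ℕ) = (t : ℕ) + 1 ∧
      x = Sum.inr (i, t) ∧ y = Sum.inr (i, t')) ∨
    (∃ (i : Fin n) (j : Fin m) (t : Fin (k - 1)), (t : ℕ) = 0 ∧ i ∉ S j ∧
      x = Sum.inl j ∧ y = Sum.inr (i, t)))

open SimpleGraph Walk

namespace RedAux

variable {n m k : ℕ} {S : Fin m → Finset (Fin n)}

lemma adj_inl_inl {j j' : Fin m} (h : j ≠ j') :
    (redGraph n m k S).Adj (Sum.inl j) (Sum.inl j') := by
  rw [redGraph, SimpleGraph.fromRel_adj]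
  exact ⟨by simpa using h, Or.inl (Or.inl ⟨j, j', rfl, rfl⟩)⟩

lemma adj_inr_cases {i : Fin n} {t : Fin (k-1)} {w : RedV n m k}
    (h : (redGraph n m k S).Adj (Sum.inr (i, t)) w) :
    (∃ t' : Fin (k-1), ((t' : ℕ) = (t : ℕ) + 1 ∨ (t : ℕ) = (t' : ℕ) + 1) ∧
      w = Sum.inr (i, t')) ∨
    ((t : ℕ) = 0 ∧ ∃ j : Fin m, w = Sum.inl j) := by
  rw [redGraph, SimpleGraph.fromRel_adj] at h
  obtain ⟨-, h | h⟩ := h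
  · rcases h with ⟨j, j', hx, hy⟩ | ⟨i', t₁, t₂, ht, hx, hy⟩ | ⟨i', j, t₁, ht0, hns, hx, hy⟩
    · exact absurd hx (by simp)
    · obtain ⟨rfl, rfl⟩ : i' = i ∧ t₁ = t := by
        simpa [Prod.ext_iff, eq_comm, and_comm] using hx
      exact Or.inl ⟨t₂, Or.inl ht, hy⟩
    · exact absurd hx (by simp)
  · rcases h with ⟨j, j', hx, hy⟩ | ⟨i', t₁, t₂, ht, hx, hy⟩ | ⟨i', j, t₁, ht0, hns, hx, hy⟩
    · exact absurd hy (by simp)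
    · obtain ⟨rfl, rfl⟩ : i' = i ∧ t₂ = t := by
        simpa [Prod.ext_iff, eq_comm, and_comm] using hy
      exact Or.inl ⟨t₁, Or.inr ht, hx⟩
    · obtain ⟨rfl, rfl⟩ : i' = i ∧ t₁ = t := by
        simpa [Prod.ext_iff, eq_comm, and_comm] using hy
      exact Or.inr ⟨ht0, j, hx⟩

end RedAux

namespace RedAux

variable {V : Type*} {G : SimpleGraph V}

lemma support_getElem_eq {u v : V} (p : G.Walk u v) (i : ℕ) (h : i < p.support.length) :
    p.support[i] = p.getVert i := by
  induction p generalizing i with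
  | nil => simp at h; simp [h]
  | cons hadj q ih =>
    cases i with
    | zero => simp
    | succ i =>
      simp only [Walk.support_cons, Walk.getVert_cons_succ]
      rw [List.getElem_cons_succ]
      exact ih i (by simpa [Walk.length_support] using (by simpa [Walk.length_support] using h))

lemma tail_getElem_eq {u : V} (c : G.Walk u u) {i : ℕ} (hi1 : 1 ≤ i) (hiL : i ≤ c.length)
    (h : i - 1 < c.support.tail.length) :
    c.support.tail[i-1] = c.getVert i := by
  rw [List.getElem_tail, support_getElem_eq c (i - 1 + 1)
    (by simp [Walk.length_support]; omega)]
  congr 1; omega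

lemma cycle_getVert_inj {v : V} {c : G.Walk v v} (hc : c.IsCycle) {i j : ℕ}
    (hi1 : 1 ≤ i) (hiL : i ≤ c.length) (hj1 : 1 ≤ j) (hjL : j ≤ c.length)
    (h : c.getVert i = c.getVert j) : i = j := by
  have nd := hc.support_nodup
  have hlen : c.support.length = c.length + 1 := by simp [Walk.length_support]
  have htl : c.support.tail.length = c.length := by
    simp [List.length_tail, hlen]
  have h1 := tail_getElem_eq c hi1 hiL (by omega)
  have h2 := tail_getElem_eq c hj1 hjL (by omega)
  have e : c.support.tail[i-1]'(by omega) = c.support.tail[j-1]'(by omega) := by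
    rw [h1, h2, h]
  have := List.Nodup.getElem_inj_iff nd |>.mp e
  omega

lemma exists_index_of_mem_edges {u v w₁ w₂ : V} (p : G.Walk u v)
    (h : s(w₁, w₂) ∈ p.edges) :
    ∃ a, a < p.length ∧ ((p.getVert a = w₁ ∧ p.getVert (a+1) = w₂) ∨
      (p.getVert a = w₂ ∧ p.getVert (a+1) = w₁)) := by
  induction p with
  | nil => simp at h
  | cons hadj q ih =>
    rw [Walk.edges_cons, List.mem_cons] at h
    rcases h with h | h
    · refine ⟨0, by simp, ?_⟩
      rw [Sym2.eq_iff] at h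
      rcases h with ⟨h1, h2⟩ | ⟨h1, h2⟩
      · exact Or.inl ⟨by simp [← h1], by simp [Walk.getVert_cons_succ, ← h2]⟩
      · exact Or.inr ⟨by simp [← h2], by simp [Walk.getVert_cons_succ, ← h1]⟩
    · obtain ⟨a, ha, hor⟩ := ih h
      exact ⟨a + 1, by simp only [Walk.length_cons]; omega,
        by simpa [Walk.getVert_cons_succ] using hor⟩

lemma length_rotate' [DecidableEq V] {v u : V} (c : G.Walk v v) (h : u ∈ c.support) :
    (c.rotate u h).length = c.length := by
  have := (Walk.rotate_darts c u h).perm.length_eq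
  simpa [Walk.length_darts] using this

lemma mem_support_closed_iff_tail {v u : V} (c : G.Walk v v) (hnil : c.length ≠ 0) :
    u ∈ c.support ↔ u ∈ c.support.tail := by
  constructor
  · intro h
    rw [Walk.support_eq_cons, List.mem_cons] at h
    rcases h with rfl | h
    · have htl : c.support.tail.length = c.length := by
        simp [List.length_tail, Walk.length_support]
      have h1 : c.support.tail[c.length - 1]'(by omega) = c.getVert c.length :=
        tail_getElem_eq c (by omega) (le_refl _) (by omega)
      rw [Walk.getVert_length] at h1
      have := List.getElem_mem (l := c.support.tail) (n := c.length - 1) (h := by omega)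
      rwa [h1] at this
    · exact h
  · intro h
    rw [Walk.support_eq_cons]
    exact List.mem_cons_of_mem _ h

lemma mem_support_rotate_iff [DecidableEq V] {v u w : V} (c : G.Walk v v)
    (h : u ∈ c.support) (hnil : c.length ≠ 0) :
    w ∈ (c.rotate u h).support ↔ w ∈ c.support := by
  rw [mem_support_closed_iff_tail _ (by rw [length_rotate']; exact hnil),
    mem_support_closed_iff_tail _ hnil]
  exact (Walk.support_rotate c u h).mem_iff

variable {n m k : ℕ} {S : Fin m → Finset (Fin n)}

/-- No path vertex `uᵢ^{t+1}` with `t ≥ 1` lies on a cycle. -/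
lemma no_deep {x : RedV n m k} {c : (redGraph n m k S).Walk x x} (hc : c.IsCycle) :
    ∀ d (i : Fin n) (t : Fin (k-1)), Sum.inr (i, t) ∈ c.support → 1 ≤ (t : ℕ) →
      (k - 1) - (t : ℕ) ≤ d → False := by
  intro d
  induction d with
  | zero => intro i t _ _ hd; have := t.isLt; omega
  | succ d ih =>
    intro i t hmem ht1 hd
    have h3 := hc.three_le_length
    have hne0 : c.length ≠ 0 := by omega
    set c' := c.rotate _ hmem with hc'def
    have hc' : c'.IsCycle := hc.rotate hmem
    have hL : c'.length = c.length := length_rotate' c hmem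
    have hadj1 : (redGraph n m k S).Adj (Sum.inr (i, t)) (c'.getVert 1) := by
      have := c'.adj_getVert_succ (i := 0) (by omega)
      simpa using this
    have hadjL : (redGraph n m k S).Adj (Sum.inr (i, t)) (c'.getVert (c'.length - 1)) := by
      have := c'.adj_getVert_succ (i := c'.length - 1) (by omega)
      have he : c'.length - 1 + 1 = c'.length := by omega
      rw [he, Walk.getVert_length] at this
      exact this.symm
    have hL2 : (c.rotate _ hmem).length = c.length := length_rotate' c hmem
    have hmem1 : c'.getVert 1 ∈ c.support := by
      rw [← mem_support_rotate_iff c hmem hne0]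
      exact Walk.mem_support_iff_exists_getVert.mpr ⟨1, rfl, by rw [hL2]; omega⟩
    have hmemL : c'.getVert (c'.length - 1) ∈ c.support := by
      rw [← mem_support_rotate_iff c hmem hne0]
      exact Walk.mem_support_iff_exists_getVert.mpr ⟨c'.length - 1, rfl, by rw [hL2]; omega⟩
    have key : ∀ w, (redGraph n m k S).Adj (Sum.inr (i, t)) w → w ∈ c.support →
        w = Sum.inr (i, ⟨(t : ℕ) - 1, by omega⟩) := by
      intro w hadj hw
      rcases adj_inr_cases hadj with ⟨t', ht' | ht', rfl⟩ | ⟨h0, _⟩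
      · exact (ih i t' hw (by omega) (by omega)).elim
      · have ht'' : t' = ⟨(t : ℕ) - 1, by omega⟩ := Fin.ext (by show (t' : ℕ) = (t : ℕ) - 1; omega)
        rw [ht'']
      · omega
    have e1 := key _ hadj1 hmem1
    have eL := key _ hadjL hmemL
    have : (1 : ℕ) = c'.length - 1 :=
      cycle_getVert_inj hc' (by omega) (by omega) (by omega) (by omega) (by rw [e1, eL])
    omega

end RedAux


/-- The Hitting-Set reduction graph is chordal: every cycle of length at least `4` has a
chord, i.e. an edge of the graph joining two vertices of the cycle that is not an edge of
the cycle. -/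
theorem redGraph_chordal (n m k : ℕ) (S : Fin m → Finset (Fin n))
    (x : RedV n m k) (c : (redGraph n m k S).Walk x x)
    (hc : c.IsCycle) (hlen : 4 ≤ c.length) :
    ∃ u v : RedV n m k, u ∈ c.support ∧ v ∈ c.support ∧
      (redGraph n m k S).Adj u v ∧ s(u, v) ∉ c.edges := by
  classical
  rcases Classical.em (∃ (i : Fin n) (t : Fin (k-1)), Sum.inr (i, t) ∈ c.support) with hinr | hinr
  · obtain ⟨i, t, hmem⟩ := hinr
    have ht0 : (t : ℕ) = 0 := by
      by_contra h
      exact RedAux.no_deep hc k i t hmem (by omega) (by omega)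
    have hne0 : c.length ≠ 0 := by omega
    set c' := c.rotate _ hmem with hc'def
    have hc' : c'.IsCycle := hc.rotate hmem
    have hL : c'.length = c.length := RedAux.length_rotate' c hmem
    have hadj1 : (redGraph n m k S).Adj (Sum.inr (i, t)) (c'.getVert 1) := by
      have := c'.adj_getVert_succ (i := 0) (by omega)
      simpa using this
    have hadjL : (redGraph n m k S).Adj (Sum.inr (i, t)) (c'.getVert (c'.length - 1)) := by
      have := c'.adj_getVert_succ (i := c'.length - 1) (by omega)
      have he : c'.length - 1 + 1 = c'.length := by omega
      rw [he, Walk.getVert_length] at this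
      exact this.symm
    have hL2 : (c.rotate _ hmem).length = c.length := RedAux.length_rotate' c hmem
    have hmem1 : c'.getVert 1 ∈ c.support := by
      rw [← RedAux.mem_support_rotate_iff c hmem hne0]
      exact Walk.mem_support_iff_exists_getVert.mpr ⟨1, rfl, by rw [hL2]; omega⟩
    have hmemL : c'.getVert (c'.length - 1) ∈ c.support := by
      rw [← RedAux.mem_support_rotate_iff c hmem hne0]
      exact Walk.mem_support_iff_exists_getVert.mpr ⟨c'.length - 1, rfl, by rw [hL2]; omega⟩
    have key : ∀ w, (redGraph n m k S).Adj (Sum.inr (i, t)) w → w ∈ c.support →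
        ∃ j : Fin m, w = Sum.inl j := by
      intro w hadj hw
      rcases RedAux.adj_inr_cases hadj with ⟨t', ht' | ht', rfl⟩ | ⟨h0, hj⟩
      · exact (RedAux.no_deep hc k i t' hw (by omega) (by omega)).elim
      · omega
      · exact hj
    obtain ⟨j₁, hj₁⟩ := key _ hadj1 hmem1
    obtain ⟨j₂, hj₂⟩ := key _ hadjL hmemL
    have hneq : c'.getVert 1 ≠ c'.getVert (c'.length - 1) := by
      intro he
      have := RedAux.cycle_getVert_inj hc' (i := 1) (j := c'.length - 1)
        (by omega) (by omega) (by omega) (by omega) he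
      omega
    refine ⟨c'.getVert 1, c'.getVert (c'.length - 1), hmem1, hmemL, ?_, ?_⟩
    · rw [hj₁, hj₂]
      exact RedAux.adj_inl_inl (fun h => hneq (by rw [hj₁, hj₂, h]))
    · intro hedge
      have hedge' : s(c'.getVert 1, c'.getVert (c'.length - 1)) ∈ c'.edges :=
        (Walk.rotate_edges c _ hmem).mem_iff.mpr hedge
      obtain ⟨a, haL, hcase⟩ := RedAux.exists_index_of_mem_edges _ hedge'
      have h0 : c'.getVert 0 = Sum.inr (i, t) := Walk.getVert_zero _
      have hLv : c'.getVert c'.length = Sum.inr (i, t) := Walk.getVert_length _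
      rcases hcase with ⟨ha1, ha2⟩ | ⟨ha1, ha2⟩
      · have ha0 : a ≠ 0 := by
          intro h; rw [h, h0] at ha1; rw [hj₁] at ha1; simp at ha1
        have haa : a = 1 := RedAux.cycle_getVert_inj hc'
          (by omega) (by omega) (by omega) (by omega) ha1
        subst haa
        have := RedAux.cycle_getVert_inj hc' (i := 2) (j := c'.length - 1)
          (by omega) (by omega) (by omega) (by omega) ha2
        omega
      · have ha0 : a ≠ 0 := by
          intro h; rw [h, h0] at ha1; rw [hj₂] at ha1; simp at ha1
        have haa : a = c'.length - 1 := RedAux.cycle_getVert_inj hc'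
          (by omega) (by omega) (by omega) (by omega) ha1
        subst haa
        have he : c'.length - 1 + 1 = c'.length := by omega
        rw [he, hLv, hj₁] at ha2
        simp at ha2
  · push_neg at hinr
    have hall : ∀ w ∈ c.support, ∃ j : Fin m, w = Sum.inl j := by
      intro w hw
      cases w with
      | inl j => exact ⟨j, rfl⟩
      | inr p =>
        obtain ⟨i, t⟩ := p
        exact (hinr i t hw).elim
    have h0mem : c.getVert 0 ∈ c.support :=
      Walk.mem_support_iff_exists_getVert.mpr ⟨0, rfl, by omega⟩
    have h2mem : c.getVert 2 ∈ c.support :=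
      Walk.mem_support_iff_exists_getVert.mpr ⟨2, rfl, by omega⟩
    obtain ⟨j₀, hj₀⟩ := hall _ h0mem
    obtain ⟨j₂, hj₂⟩ := hall _ h2mem
    have h0L : c.getVert 0 = c.getVert c.length := by
      rw [Walk.getVert_zero, Walk.getVert_length]
    have hneq : c.getVert 0 ≠ c.getVert 2 := by
      intro he
      have := RedAux.cycle_getVert_inj hc (i := 2) (j := c.length)
        (by omega) (by omega) (by omega) (le_refl _) (by rw [← he, h0L])
      omega
    refine ⟨c.getVert 0, c.getVert 2, h0mem, h2mem, ?_, ?_⟩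
    · rw [hj₀, hj₂]
      exact RedAux.adj_inl_inl (fun h => hneq (by rw [hj₀, hj₂, h]))
    · intro hedge
      obtain ⟨a, haL, hcase⟩ := RedAux.exists_index_of_mem_edges _ hedge
      rcases hcase with ⟨ha1, ha2⟩ | ⟨ha1, ha2⟩
      · by_cases ha0 : a = 0
        · subst ha0
          have := RedAux.cycle_getVert_inj hc (i := 1) (j := 2)
            (by omega) (by omega) (by omega) (by omega) ha2
          omega
        · rw [h0L] at ha1
          have := RedAux.cycle_getVert_inj hc (i := a) (j := c.length)
            (by omega) (by omega) (by omega) (le_refl _) ha1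
          omega
      · by_cases ha0 : a = 0
        · subst ha0
          exact hneq ha1
        · have haa : a = 2 := RedAux.cycle_getVert_inj hc
            (by omega) (by omega) (by omega) (by omega) ha1
          subst haa
          rw [h0L] at ha2
          have := RedAux.cycle_getVert_inj hc (i := 3) (j := c.length)
            (by omega) (by omega) (by omega) (le_refl _) ha2
          omega
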